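/- arXiv:1604.01983 — 2 statements merged into one kernel-verified Lean document; each statement's English description precedes it below -/
import Mathlib

section
/- Let f2(x; β) be the exponential density with scale β > 0 and f1(x; σ) the half-normal density with scale σ > 0. Then the infimum over σ > 0 of D_KL(f2(·; β) ‖ f1(·; σ)) does not depend on β: it equals (log π − 1)/2 for every β > 0, and is attained at σ = β√2. -/
open MeasureTheory Real

/-- Kullback--Leibler divergence between two densities on `(0, ∞)` (i.e. `∫₀^∞`). -/
noncomputable def klDivPos (f g : ℝ → ℝ) : ℝ :=
  ∫ x in Set.Ioi (0:ℝ), f x * Real.log (f x / g x)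

/-- Half-normal density with scale `σ`. -/
noncomputable def halfNormalPdf (σ : ℝ) (x : ℝ) : ℝ :=
  (1 / σ) * Real.sqrt (2 / Real.pi) * Real.exp (-(x ^ 2) / (2 * σ ^ 2))

/-- Exponential density with scale `β`. -/
noncomputable def expPdf (β : ℝ) (x : ℝ) : ℝ :=
  (1 / β) * Real.exp (-x / β)

lemma integ_n (r : ℝ) (hr : 0 < r) (n : ℕ) :
    IntegrableOn (fun x => x ^ n * Real.exp (-(r * x))) (Set.Ioi 0) := by
  have h := integrableOn_rpow_mul_exp_neg_mul_rpow (p := 1) (s := n) (b := r)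
    (by have := n.cast_nonneg (α := ℝ); linarith) zero_lt_one hr
  simpa [Real.rpow_natCast] using h

lemma integral_n (r : ℝ) (hr : 0 < r) (n : ℕ) :
    ∫ x in Set.Ioi (0:ℝ), x ^ n * Real.exp (-(r * x)) = n.factorial / r ^ (n + 1) := by
  have h := integral_rpow_mul_exp_neg_mul_Ioi (a := n + 1) (by positivity) hr
  rw [show ((n : ℝ) + 1) - 1 = (n : ℝ) by ring] at h
  have h2 : ∀ t ∈ Set.Ioi (0:ℝ), t ^ (n : ℝ) * Real.exp (-(r * t)) = t ^ n * Real.exp (-(r * t)) := by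
    intro t ht; rw [Real.rpow_natCast]
  rw [setIntegral_congr_fun measurableSet_Ioi h2] at h
  rw [h, Real.Gamma_nat_eq_factorial,
    show ((n : ℝ) + 1) = ((n + 1 : ℕ) : ℝ) by push_cast; ring, Real.rpow_natCast]
  field_simp
  rw [← mul_pow, one_div_mul_cancel hr.ne', one_pow]

lemma kl_value (β σ : ℝ) (hβ : 0 < β) (hσ : 0 < σ) :
    klDivPos (expPdf β) (halfNormalPdf σ) =
      Real.log σ - Real.log β - Real.log (Real.sqrt (2 / Real.pi)) - 1 + β ^ 2 / σ ^ 2 := by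
  have hπ := Real.pi_pos
  have hs : (0:ℝ) < Real.sqrt (2 / Real.pi) := Real.sqrt_pos.2 (by positivity)
  have key : ∀ x ∈ Set.Ioi (0:ℝ),
      expPdf β x * Real.log (expPdf β x / halfNormalPdf σ x) =
        (Real.log σ - Real.log β - Real.log (Real.sqrt (2 / Real.pi)))
            * ((1/β) * (x ^ 0 * Real.exp (-(β⁻¹ * x))))
        + (-(1/β)) * ((1/β) * (x ^ 1 * Real.exp (-(β⁻¹ * x))))
        + (1/(2*σ^2)) * ((1/β) * (x ^ 2 * Real.exp (-(β⁻¹ * x)))) := by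
    intro x hx
    have hfx : expPdf β x > 0 := by unfold expPdf; positivity
    have hgx : halfNormalPdf σ x > 0 := by unfold halfNormalPdf; positivity
    rw [Real.log_div (ne_of_gt hfx) (ne_of_gt hgx)]
    unfold expPdf halfNormalPdf
    rw [Real.log_mul (by positivity) (Real.exp_ne_zero _),
        Real.log_mul (by positivity) (Real.exp_ne_zero _),
        Real.log_mul (by positivity) (ne_of_gt hs),
        Real.log_exp, Real.log_exp, one_div, one_div, Real.log_inv, Real.log_inv]
    rw [show Real.exp (-x / β) = Real.exp (-(β⁻¹ * x)) by ring_nf]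
    generalize Real.log (Real.sqrt (2 / Real.pi)) = L
    field_simp
    ring
  unfold klDivPos
  rw [setIntegral_congr_fun measurableSet_Ioi key]
  have hb : (0:ℝ) < β⁻¹ := by positivity
  have I1 : Integrable (fun x => (Real.log σ - Real.log β - Real.log (Real.sqrt (2 / Real.pi)))
      * ((1/β) * (x ^ 0 * Real.exp (-(β⁻¹ * x))))) (volume.restrict (Set.Ioi 0)) :=
    ((integ_n β⁻¹ hb 0).const_mul (1/β)).const_mul _
  have I2 : Integrable (fun x => (-(1/β)) * ((1/β) * (x ^ 1 * Real.exp (-(β⁻¹ * x)))))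
      (volume.restrict (Set.Ioi 0)) := ((integ_n β⁻¹ hb 1).const_mul (1/β)).const_mul _
  have I3 : Integrable (fun x => (1/(2*σ^2)) * ((1/β) * (x ^ 2 * Real.exp (-(β⁻¹ * x)))))
      (volume.restrict (Set.Ioi 0)) := ((integ_n β⁻¹ hb 2).const_mul (1/β)).const_mul _
  have I12 : Integrable (fun x => (Real.log σ - Real.log β - Real.log (Real.sqrt (2 / Real.pi)))
      * ((1/β) * (x ^ 0 * Real.exp (-(β⁻¹ * x))))
      + (-(1/β)) * ((1/β) * (x ^ 1 * Real.exp (-(β⁻¹ * x))))) (volume.restrict (Set.Ioi 0)) :=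
    I1.add I2
  rw [integral_add I12 I3, integral_add I1 I2,
      integral_const_mul, integral_const_mul, integral_const_mul,
      integral_const_mul, integral_const_mul, integral_const_mul,
      integral_n β⁻¹ hb 0, integral_n β⁻¹ hb 1, integral_n β⁻¹ hb 2]
  simp only [Nat.factorial]
  push_cast
  field_simp
  ring

lemma log_sqrt_two_div_pi :
    Real.log (Real.sqrt (2 / Real.pi)) = (Real.log 2 - Real.log Real.pi) / 2 := by
  rw [Real.log_sqrt (by positivity), Real.log_div two_ne_zero (ne_of_gt Real.pi_pos)]

lemma kl_lower (β σ : ℝ) (hβ : 0 < β) (hσ : 0 < σ) :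
    (Real.log Real.pi - 1) / 2 ≤ klDivPos (expPdf β) (halfNormalPdf σ) := by
  rw [kl_value β σ hβ hσ, log_sqrt_two_div_pi]
  have hs2 : Real.sqrt 2 ^ 2 = 2 := Real.sq_sqrt (by norm_num)
  have hs2p : (0:ℝ) < Real.sqrt 2 := Real.sqrt_pos.2 (by norm_num)
  set t := σ / (β * Real.sqrt 2) with htd
  have ht : 0 < t := by positivity
  have hσt : σ = t * (β * Real.sqrt 2) := by rw [htd, div_mul_cancel₀ _ (by positivity)]
  have hσ2 : σ ^ 2 = 2 * t ^ 2 * β ^ 2 := by rw [hσt]; nlinarith [hs2]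
  have hβσ : β ^ 2 / σ ^ 2 = 1 / (2 * t ^ 2) := by rw [hσ2]; field_simp
  have hlt : Real.log t = Real.log σ - Real.log β - Real.log 2 / 2 := by
    rw [htd, Real.log_div (ne_of_gt hσ) (by positivity),
      Real.log_mul (ne_of_gt hβ) (ne_of_gt hs2p), Real.log_sqrt (by norm_num)]
    ring
  have hlog : -Real.log t ≤ 1 / t - 1 := by
    have h := Real.log_le_sub_one_of_pos (x := t⁻¹) (by positivity)
    rw [Real.log_inv] at h
    rw [one_div]
    linarith
  rw [hβσ]
  have h1 : 1 - 1/t ≤ Real.log t := by linarith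
  have h : 1/(2*t^2) = (1/t)^2/2 := by field_simp
  rw [h]
  nlinarith [sq_nonneg (1 - 1/t)]

lemma kl_attained (β : ℝ) (hβ : 0 < β) :
    klDivPos (expPdf β) (halfNormalPdf (β * Real.sqrt 2)) = (Real.log Real.pi - 1) / 2 := by
  have hs2 : Real.sqrt 2 ^ 2 = 2 := Real.sq_sqrt (by norm_num)
  have hs2p : (0:ℝ) < Real.sqrt 2 := Real.sqrt_pos.2 (by norm_num)
  rw [kl_value β (β * Real.sqrt 2) hβ (by positivity), log_sqrt_two_div_pi,
    Real.log_mul (ne_of_gt hβ) (ne_of_gt hs2p), Real.log_sqrt (by norm_num)]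
  have h1 : β ^ 2 / (β * Real.sqrt 2) ^ 2 = 1 / 2 := by
    rw [mul_pow, hs2]; field_simp
  rw [h1]; ring

theorem inf_kl_exponential_halfNormal (β : ℝ) (hβ : 0 < β) :
    sInf {d : ℝ | ∃ σ : ℝ, 0 < σ ∧ d = klDivPos (expPdf β) (halfNormalPdf σ)} =
        (Real.log Real.pi - 1) / 2 ∧
      klDivPos (expPdf β) (halfNormalPdf (β * Real.sqrt 2)) =
        (Real.log Real.pi - 1) / 2 := by
  have hs2p : (0:ℝ) < Real.sqrt 2 := Real.sqrt_pos.2 (by norm_num)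
  have hmem : (Real.log Real.pi - 1) / 2 ∈
      {d : ℝ | ∃ σ : ℝ, 0 < σ ∧ d = klDivPos (expPdf β) (halfNormalPdf σ)} :=
    ⟨β * Real.sqrt 2, by positivity, (kl_attained β hβ).symm⟩
  have hlb : ∀ d ∈ {d : ℝ | ∃ σ : ℝ, 0 < σ ∧ d = klDivPos (expPdf β) (halfNormalPdf σ)},
      (Real.log Real.pi - 1) / 2 ≤ d := by
    rintro d ⟨σ, hσ, rfl⟩
    exact kl_lower β σ hβ hσ
  exact ⟨le_antisymm (csInf_le ⟨_, hlb⟩ hmem) (le_csInf ⟨_, hmem⟩ hlb), kl_attained β hβ⟩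
end

section
/- Let h1 and h2 be probability density functions on ℝ, and for θ = (a, b) ∈ Θ = ℝ × (0, ∞) define f_i(x; θ) = b⁻¹ h_i((x − a)/b) for i = 1, 2. Let c = inf_{θ2 ∈ Θ} D_KL(h1 ‖ f2(·; θ2)). Then for every probability measure π1 on Θ (a prior for the parameters of model M1), the expected loss ∫_Θ [inf_{θ2 ∈ Θ} D_KL(f1(·; θ1) ‖ f2(·; θ2))] π1(dθ1) equals c; in particular the model prior P(M1) ∝ exp{∫_Θ inf_{θ2} D_KL(f1(·; θ1) ‖ f2(·; θ2)) π1(dθ1)} = exp(c) does not depend on the choice of the prior π1. -/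
open MeasureTheory Real

/-- Kullback--Leibler divergence between two densities on ℝ (w.r.t. Lebesgue measure). -/
noncomputable def klDiv (f g : ℝ → ℝ) : ℝ :=
  ∫ x, f x * Real.log (f x / g x)

/-- A location-scale density with reduced density `h`, location `θ.1` and scale `θ.2`. -/
noncomputable def lsPdf (h : ℝ → ℝ) (θ : ℝ × ℝ) (x : ℝ) : ℝ :=
  θ.2⁻¹ * h ((x - θ.1) / θ.2)

/-- The minimal Kullback--Leibler loss incurred by choosing model 2 (with reduced
density `h2`) when the true model is the location-scale density `lsPdf h1 θ1`. -/
noncomputable def minLoss (h1 : ℝ → ℝ) (h2 : ℝ → ℝ) (θ1 : ℝ × ℝ) : ℝ :=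
  sInf {d : ℝ | ∃ θ2 : ℝ × ℝ, 0 < θ2.2 ∧ d = klDiv (lsPdf h1 θ1) (lsPdf h2 θ2)}

/-- Change of variables: the KL divergence from a location-scale density `lsPdf h1 θ1`
to `lsPdf h2 θ2` equals the KL divergence from the reduced density `h1` to the
location-scale density with relative parameters. -/
lemma klDiv_lsPdf_eq (h1 h2 : ℝ → ℝ) (θ1 θ2 : ℝ × ℝ) (hb1 : 0 < θ1.2) (hb2 : 0 < θ2.2) :
    klDiv (lsPdf h1 θ1) (lsPdf h2 θ2)
      = klDiv h1 (lsPdf h2 ((θ2.1 - θ1.1) / θ1.2, θ2.2 / θ1.2)) := by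
  obtain ⟨a1, b1⟩ := θ1
  obtain ⟨a2, b2⟩ := θ2
  simp only at hb1 hb2
  set G : ℝ → ℝ := fun y => h1 y *
    Real.log (h1 y / ((b2 / b1)⁻¹ * h2 ((y - (a2 - a1) / b1) / (b2 / b1)))) with hG
  have step1 : klDiv (lsPdf h1 (a1, b1)) (lsPdf h2 (a2, b2))
      = ∫ x, b1⁻¹ • G ((x - a1) / b1) := by
    unfold klDiv lsPdf
    congr 1
    ext x
    simp only [hG, smul_eq_mul]
    have harg : ((x - a1) / b1 - (a2 - a1) / b1) / (b2 / b1) = (x - a2) / b2 := by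
      field_simp
      ring
    rw [harg]
    have hratio : h1 ((x - a1) / b1) / ((b2 / b1)⁻¹ * h2 ((x - a2) / b2))
        = b1⁻¹ * h1 ((x - a1) / b1) / (b2⁻¹ * h2 ((x - a2) / b2)) := by
      rcases eq_or_ne (h2 ((x - a2) / b2)) 0 with hz | hz
      · simp [hz]
      · field_simp
    rw [hratio]
    ring
  rw [step1]
  have hsm : (∫ x, b1⁻¹ • G ((x - a1) / b1)) = b1⁻¹ • ∫ x, G ((x - a1) / b1) :=
    integral_smul _ _
  rw [hsm]
  have h2' : (∫ x, G ((x - a1) / b1)) = ∫ x, (fun y => G (y / b1)) (x - a1) := by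
    simp
  rw [h2', integral_sub_right_eq_self (fun y => G (y / b1)) a1,
    Measure.integral_comp_div G b1, smul_smul, abs_of_pos hb1,
    inv_mul_cancel₀ hb1.ne', one_smul]
  rfl

/-- for location-scale models, the expected loss
`∫ inf_{θ2} D_KL(f1(·; θ1) ‖ f2(·; θ2)) π1(dθ1)` equals the constant
`c = inf_{θ2} D_KL(h1 ‖ f2(·; θ2))` for every prior `π1` on `Θ = ℝ × (0, ∞)`; hence the
Villa--Walker model prior `P(M1) ∝ exp{expected loss} = exp c` does not depend on `π1`. -/
theorem expected_minLoss_const_of_locationScale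
    (h1 h2 : ℝ → ℝ) (hm1 : Measurable h1) (hm2 : Measurable h2)
    (h1nn : ∀ x, 0 ≤ h1 x) (h2nn : ∀ x, 0 ≤ h2 x)
    (h1int : ∫ x, h1 x = 1) (h2int : ∫ x, h2 x = 1)
    (c : ℝ)
    (hc : c = sInf {d : ℝ | ∃ θ2 : ℝ × ℝ, 0 < θ2.2 ∧ d = klDiv h1 (lsPdf h2 θ2)})
    (π1 : Measure (ℝ × ℝ)) [IsProbabilityMeasure π1]
    (hπ1 : π1 {θ : ℝ × ℝ | ¬ 0 < θ.2} = 0) :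
    (∫ θ1, minLoss h1 h2 θ1 ∂π1) = c ∧
      Real.exp (∫ θ1, minLoss h1 h2 θ1 ∂π1) = Real.exp c := by
  have hconst : ∀ θ1 : ℝ × ℝ, 0 < θ1.2 → minLoss h1 h2 θ1 = c := by
    intro θ1 hb1
    rw [hc]
    unfold minLoss
    congr 1
    ext d
    constructor
    · rintro ⟨θ2, hb2, rfl⟩
      exact ⟨((θ2.1 - θ1.1) / θ1.2, θ2.2 / θ1.2), div_pos hb2 hb1,
        klDiv_lsPdf_eq h1 h2 θ1 θ2 hb1 hb2⟩
    · rintro ⟨θ2, hb2, rfl⟩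
      refine ⟨(θ1.1 + θ1.2 * θ2.1, θ1.2 * θ2.2), mul_pos hb1 hb2, ?_⟩
      rw [klDiv_lsPdf_eq h1 h2 θ1 _ hb1 (mul_pos hb1 hb2)]
      have hpair : ((θ1.1 + θ1.2 * θ2.1 - θ1.1) / θ1.2, θ1.2 * θ2.2 / θ1.2) = θ2 := by
        obtain ⟨a, b⟩ := θ2
        simp only [Prod.mk.injEq]
        constructor <;> field_simp <;> ring
      rw [hpair]
  have hae : (fun θ1 => minLoss h1 h2 θ1) =ᵐ[π1] fun _ => c := by
    have hpos : ∀ᵐ θ1 ∂π1, 0 < θ1.2 := by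
      rw [ae_iff]
      exact hπ1
    filter_upwards [hpos] with θ1 hθ1 using hconst θ1 hθ1
  have hint : (∫ θ1, minLoss h1 h2 θ1 ∂π1) = c := by
    rw [integral_congr_ae hae]
    simp
  exact ⟨hint, by rw [hint]⟩
end
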